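/- Let x, y be vertices of the tree T with d(x,y) = n ≥ 1 and let x = v_0, v_1, …, v_n = y be the geodesic edge-path from x to y. Then for every z ∈ 𝔻, c_z(x,y)δ_y = wδ_{v_n} + wzδ_{v_{n−1}} + wz²δ_{v_{n−2}} + ⋯ + wz^{n−1}δ_{v_1} + z^nδ_{v_0}. -/

import Mathlib

noncomputable section

open scoped ComplexConjugate

/-- `ℓ²(X)`: the Hilbert space of square-summable complex functions on `X`. -/
abbrev ell2 (X : Type) : Type := lp (fun _ : X => ℂ) 2

/-- The Dirac function `δ_v` at a vertex `v`. -/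
noncomputable def delta {X : Type} [DecidableEq X] (v : X) : ell2 X :=
  lp.single 2 v (1 : ℂ)

/-- `w = √(1 − z²)`, using the principal branch of the square root, which is
holomorphic off the negative real axis and positive on the positive reals. -/
noncomputable def W (z : ℂ) : ℂ := (1 - z ^ 2) ^ ((1 : ℂ) / 2)

/-- The defining property of the edge operator `c_z(x,y)` for adjacent vertices
`x, y`: it sends `δ_x ↦ wδ_x − zδ_y`, `δ_y ↦ wδ_y + zδ_x`, and fixes `δ_v` for
every other vertex `v`. -/
def IsEdgeOp {X : Type} [DecidableEq X] (z : ℂ) (x y : X)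
    (A : ell2 X →L[ℂ] ell2 X) : Prop :=
  A (delta x) = W z • delta x - z • delta y ∧
  A (delta y) = W z • delta y + z • delta x ∧
  ∀ v : X, v ≠ x → v ≠ y → A (delta v) = delta v

/-- The product `f(v₀,v₁) * f(v₁,v₂) * ⋯ * f(v_{n−1},v_n)` along a walk
`v₀, v₁, …, v_n`. -/
def walkProd {X : Type} {T : SimpleGraph X} {E : Type} [Monoid E]
    (f : X → X → E) : {a b : X} → T.Walk a b → E
  | _, _, SimpleGraph.Walk.nil => 1
  | _, _, SimpleGraph.Walk.cons (u := u) (v := v) _ p => f u v * walkProd f p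

/-- Let `x, y` be vertices of the tree `T` with `d(x,y) = n ≥ 1` and let
`x = v₀, v₁, …, v_n = y` be the geodesic edge-path from `x` to `y`.  Then for every
`z ∈ 𝔻`,
`c_z(x,y)δ_y = wδ_{v_n} + wzδ_{v_{n−1}} + wz²δ_{v_{n−2}} + ⋯ + wz^{n−1}δ_{v_1} + z^nδ_{v_0}`. -/
lemma getVert_ne_start {X : Type} {T : SimpleGraph X} {v y : X} (q : T.Walk v y)
    (hq : q.IsPath) {i : ℕ} (h1 : 1 ≤ i) (h2 : i ≤ q.length) : q.getVert i ≠ v := by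
  cases q with
  | nil => simp at h2; omega
  | cons h r =>
    obtain ⟨i, rfl⟩ : ∃ j, i = j + 1 := ⟨i - 1, by omega⟩
    rw [SimpleGraph.Walk.getVert_cons_succ]
    have hv : v ∉ r.support := (SimpleGraph.Walk.cons_isPath_iff _ _ |>.mp hq).2
    intro hc
    exact hv (SimpleGraph.Walk.mem_support_iff_exists_getVert.mpr
      ⟨i, hc, by simpa using Nat.le_of_succ_le_succ (by simpa using h2)⟩)

lemma walkProd_apply {X : Type} [DecidableEq X] {T : SimpleGraph X} (z : ℂ)
    (c : X → X → (ell2 X →L[ℂ] ell2 X))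
    (hedge : ∀ u v : X, T.Adj u v → IsEdgeOp z u v (c u v)) :
    ∀ {x y : X} (p : T.Walk x y), p.IsPath →
      walkProd c p (delta y) = (z ^ p.length) • delta x +
        ∑ i ∈ Finset.Icc 1 p.length, (W z * z ^ (p.length - i)) • delta (p.getVert i) := by
  intro x y p
  induction p with
  | nil => intro _; simp [walkProd]
  | @cons x v y h q ih =>
    intro hp
    have hq : q.IsPath := hp.of_cons
    have hxs : x ∉ q.support := (SimpleGraph.Walk.cons_isPath_iff _ _ |>.mp hp).2
    set n := q.length with hn
    have hstep : walkProd c (SimpleGraph.Walk.cons h q) (delta y)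
        = (c x v) (walkProd c q (delta y)) := rfl
    rw [hstep, ih hq]
    obtain ⟨h1, h2, h3⟩ := hedge x v h
    have hfix : ∀ i ∈ Finset.Icc 1 n, (c x v) (delta (q.getVert i)) = delta (q.getVert i) := by
      intro i hi
      rw [Finset.mem_Icc] at hi
      refine h3 _ ?_ (getVert_ne_start q hq hi.1 hi.2)
      intro hc
      exact hxs (hc ▸ SimpleGraph.Walk.mem_support_iff_exists_getVert.mpr ⟨i, rfl, hi.2⟩)
    have hv0 : q.getVert 0 = v := q.getVert_zero
    rw [map_add, map_smul, map_sum, h2, Finset.sum_congr rfl (fun i hi => by rw [map_smul, hfix i hi])]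
    -- Now manipulate sums
    have hlen : (SimpleGraph.Walk.cons h q).length = n + 1 := by
      simp [SimpleGraph.Walk.length_cons, hn]
    rw [hlen]
    have hIcc : ∀ (g : ℕ → ell2 X) (m : ℕ), ∑ i ∈ Finset.Icc 1 m, g i
        = ∑ i ∈ Finset.range m, g (1 + i) := by
      intro g m
      rw [← Finset.Ico_add_one_right_eq_Icc, Finset.sum_Ico_eq_sum_range]
      simp
    rw [hIcc, hIcc]
    rw [Finset.sum_range_succ']
    have hg0 : (W z * z ^ (n + 1 - (1 + 0))) • delta ((SimpleGraph.Walk.cons h q).getVert (1 + 0))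
        = (W z * z ^ n) • delta v := by
      have : (SimpleGraph.Walk.cons h q).getVert 1 = v := by
        rw [show (1 : ℕ) = 0 + 1 from rfl, SimpleGraph.Walk.getVert_cons_succ, hv0]
      simp [this]
    have hgsucc : ∀ i ∈ Finset.range n,
        (W z * z ^ (n + 1 - (1 + (i + 1)))) • delta ((SimpleGraph.Walk.cons h q).getVert (1 + (i + 1)))
        = (W z * z ^ (n - (1 + i))) • delta (q.getVert (1 + i)) := by
      intro i hi
      rw [Finset.mem_range] at hi
      have e1 : n + 1 - (1 + (i + 1)) = n - (1 + i) := by omega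
      have e2 : (SimpleGraph.Walk.cons h q).getVert (1 + (i + 1)) = q.getVert (1 + i) := by
        rw [show 1 + (i + 1) = (1 + i) + 1 by omega, SimpleGraph.Walk.getVert_cons_succ]
      rw [e1, e2]
    rw [Finset.sum_congr rfl hgsucc, hg0]
    rw [smul_add, smul_smul, smul_smul, pow_succ, mul_comm (W z) (z ^ n)]
    abel

theorem cocycle_apply_delta_endpoint {X : Type} [DecidableEq X] (T : SimpleGraph X)
    (hconn : T.Connected) (hacyc : T.IsAcyclic)
    (c : ℂ → X → X → (ell2 X →L[ℂ] ell2 X))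
    (hedge : ∀ z ∈ Metric.ball (0 : ℂ) 1, ∀ u v : X, T.Adj u v →
      IsEdgeOp z u v (c z u v))
    (hgeo : ∀ z ∈ Metric.ball (0 : ℂ) 1, ∀ u v : X, ∀ p : T.Walk u v,
      p.length = T.dist u v → c z u v = walkProd (c z) p)
    (x y : X) (n : ℕ) (hn : 1 ≤ n) (hd : T.dist x y = n)
    (p : T.Walk x y) (hp : p.length = n) :
    ∀ z ∈ Metric.ball (0 : ℂ) 1,
      c z x y (delta y) =
        (z ^ n) • delta x +
          ∑ i ∈ Finset.Icc 1 n, (W z * z ^ (n - i)) • delta (p.getVert i) := by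
  intro z hz
  have hpath : p.IsPath := p.isPath_of_length_eq_dist (by rw [hp, hd])
  rw [hgeo z hz x y p (by rw [hp, hd]), walkProd_apply z (c z) (fun u v huv => hedge z hz u v huv) p hpath, hp]
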